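/- There exist abelian surfaces that can be written as a product of two elliptic curves in two genuinely distinct ways, i.e., there exist elliptic curves E₁, E₂, F₁, F₂ with E₁ × E₂ ≅ F₁ × F₂ but {E₁, E₂} ≇ {F₁, F₂} as unordered pairs. -/

import Mathlib

/-- A complex lattice: the subgroup of `ℂ` generated by two `ℝ`-linearly independent periods.
An elliptic curve is `ℂ / Λ` for such a lattice `Λ`. -/
def IsComplexLattice (L : AddSubgroup ℂ) : Prop :=
  ∃ ω₁ ω₂ : ℂ, LinearIndependent ℝ ![ω₁, ω₂] ∧ L = AddSubgroup.closure {ω₁, ω₂}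

/-- The elliptic curves `ℂ/L₁` and `ℂ/L₂` are isomorphic iff the lattices are homothetic. -/
def EllIso (L₁ L₂ : AddSubgroup ℂ) : Prop :=
  ∃ α : ℂ, α ≠ 0 ∧ (fun z => α * z) '' (L₁ : Set ℂ) = (L₂ : Set ℂ)

/-- The abelian surfaces `ℂ²/(L₁ × L₂)` and `ℂ²/(L₃ × L₄)` are isomorphic iff a `ℂ`-linear
automorphism of `ℂ²` carries one product lattice to the other. -/
def ProdIso (L₁ L₂ L₃ L₄ : AddSubgroup ℂ) : Prop :=
  ∃ M : (ℂ × ℂ) ≃ₗ[ℂ] ℂ × ℂ, M '' ((L₁ : Set ℂ) ×ˢ (L₂ : Set ℂ)) = (L₃ : Set ℂ) ×ˢ (L₄ : Set ℂ)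


open Complex

noncomputable def theta : ℂ := (Real.sqrt 5 : ℂ) * Complex.I

lemma theta_re : theta.re = 0 := by simp [theta]
lemma theta_im : theta.im = Real.sqrt 5 := by simp [theta]
lemma sqrt5_pos : (0:ℝ) < Real.sqrt 5 := Real.sqrt_pos.mpr (by norm_num)
lemma theta_sq : theta * theta = -5 := by
  have h : (Real.sqrt 5 : ℝ) * Real.sqrt 5 = 5 := Real.mul_self_sqrt (by norm_num)
  simp only [theta]
  calc (Real.sqrt 5 : ℂ) * Complex.I * ((Real.sqrt 5 : ℂ) * Complex.I)
      = ((Real.sqrt 5 * Real.sqrt 5 : ℝ) : ℂ) * (Complex.I * Complex.I) := by push_cast; ring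
    _ = -5 := by rw [h, Complex.I_mul_I]; push_cast; ring

lemma mem_pair {a b x : ℂ} :
    x ∈ AddSubgroup.closure {a, b} ↔ ∃ m n : ℤ, x = m * a + n * b := by
  constructor
  · intro h
    induction h using AddSubgroup.closure_induction with
    | mem y hy =>
      rcases hy with rfl | rfl
      · exact ⟨1, 0, by push_cast; ring⟩
      · exact ⟨0, 1, by push_cast; ring⟩
    | zero => exact ⟨0, 0, by push_cast; ring⟩
    | add y z hy hz ihy ihz =>
      obtain ⟨m, n, rfl⟩ := ihy
      obtain ⟨p, q, rfl⟩ := ihz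
      exact ⟨m + p, n + q, by push_cast; ring⟩
    | neg y hy ihy =>
      obtain ⟨m, n, rfl⟩ := ihy
      exact ⟨-m, -n, by push_cast; ring⟩
  · rintro ⟨m, n, rfl⟩
    have ha : a ∈ AddSubgroup.closure {a, b} := AddSubgroup.subset_closure (by simp)
    have hb : b ∈ AddSubgroup.closure {a, b} := AddSubgroup.subset_closure (by simp)
    have := AddSubgroup.add_mem _ (AddSubgroup.zsmul_mem _ ha m) (AddSubgroup.zsmul_mem _ hb n)
    simpa [zsmul_eq_mul] using this

lemma nsq (a b : ℝ) : Complex.normSq ((a:ℂ) + (b:ℂ) * theta) = a^2 + 5 * b^2 := by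
  have h : (Real.sqrt 5 : ℝ) * Real.sqrt 5 = 5 := Real.mul_self_sqrt (by norm_num)
  simp [Complex.normSq_apply, Complex.add_re, Complex.add_im, Complex.mul_re, Complex.mul_im,
    theta_re, theta_im]
  ring_nf
  nlinarith [h]

lemma sq_one_le {k : ℤ} (h : k ≠ 0) : 1 ≤ k^2 := by
  rcases h.lt_or_gt with h | h <;> nlinarith

lemma final (m n p q r s : ℤ) (hmn : ¬(2*m + n = 0 ∧ n = 0))
    (h4 : ((2*m+n)^2 + 5*n^2) * (p^2 + 5*q^2) = 4)
    (h6 : ((2*m+n)^2 + 5*n^2) * (r^2 + 5*s^2) = 6) : False := by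
  set N := (2*m+n)^2 + 5*n^2 with hN
  have hdvd : N ∣ 2 := by
    have d4 : N ∣ 4 := ⟨_, h4.symm⟩
    have d6 : N ∣ 6 := ⟨_, h6.symm⟩
    have := dvd_sub d6 d4
    norm_num at this
    exact this
  have hge : 4 ≤ N := by
    rcases eq_or_ne n 0 with rfl | hn
    · have hm : m ≠ 0 := by intro h; exact hmn ⟨by omega, rfl⟩
      have := sq_one_le hm
      nlinarith
    · have h1 := sq_one_le hn
      nlinarith [sq_nonneg (2*m+n)]
  have := Int.le_of_dvd (by norm_num) hdvd
  omega

noncomputable def Lat1 : AddSubgroup ℂ := AddSubgroup.closure {1, theta}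
noncomputable def Lat3 : AddSubgroup ℂ := AddSubgroup.closure {2, 1 + theta}
noncomputable def Lat4 : AddSubgroup ℂ := AddSubgroup.closure {1, (1 + theta)/2}

lemma li1 : LinearIndependent ℝ ![(1:ℂ), theta] := by
  rw [linearIndependent_fin2]
  constructor
  · intro h
    have := congrArg Complex.im h
    simp [theta_im] at this
    try exact sqrt5_pos.ne' this
  · intro a h
    have h1 := congrArg Complex.re h
    simp [Complex.smul_re, theta_re] at h1

lemma li3 : LinearIndependent ℝ ![(2:ℂ), 1 + theta] := by
  rw [linearIndependent_fin2]
  constructor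
  · intro h
    have := congrArg Complex.im h
    simp [theta_im] at this
    try exact sqrt5_pos.ne' this
  · intro a h
    have h1 := congrArg Complex.im h
    have h2 := congrArg Complex.re h
    simp [Complex.smul_im, Complex.smul_re, theta_im, theta_re] at h1 h2
    try { subst h1; norm_num at h2 }

lemma li4 : LinearIndependent ℝ ![(1:ℂ), (1 + theta)/2] := by
  rw [linearIndependent_fin2]
  constructor
  · intro h
    have := congrArg Complex.im h
    simp [Complex.div_im, theta_im, Complex.normSq_apply] at this
    try nlinarith [sqrt5_pos, this]
  · intro a h
    have h1 := congrArg Complex.im h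
    have h2 := congrArg Complex.re h
    simp [Complex.smul_im, Complex.smul_re, Complex.div_im, Complex.div_re, theta_im, theta_re,
      Complex.normSq_apply] at h1 h2
    try { subst h1; norm_num at h2 }

noncomputable def fmap : (ℂ × ℂ) →ₗ[ℂ] ℂ × ℂ where
  toFun p := (2 * p.1 + (1 + theta) * p.2, ((theta - 1)/2) * p.1 - p.2)
  map_add' p q := by refine Prod.ext ?_ ?_ <;> simp <;> ring
  map_smul' c p := by refine Prod.ext ?_ ?_ <;> simp [smul_eq_mul] <;> ring

noncomputable def gmap : (ℂ × ℂ) →ₗ[ℂ] ℂ × ℂ where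
  toFun q := (-q.1 - (1 + theta) * q.2, ((1 - theta)/2) * q.1 + 2 * q.2)
  map_add' p q := by refine Prod.ext ?_ ?_ <;> simp <;> ring
  map_smul' c p := by refine Prod.ext ?_ ?_ <;> simp [smul_eq_mul] <;> ring

lemma fg : fmap ∘ₗ gmap = LinearMap.id := by
  apply LinearMap.ext
  intro q
  simp only [fmap, gmap, LinearMap.coe_comp, LinearMap.coe_mk, AddHom.coe_mk, Function.comp_apply,
    LinearMap.id_coe, id_eq, Prod.ext_iff]
  constructor
  · linear_combination (-(q.1)/2) * theta_sq
  · linear_combination (-(q.2)/2) * theta_sq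

lemma gf : gmap ∘ₗ fmap = LinearMap.id := by
  apply LinearMap.ext
  intro q
  simp only [fmap, gmap, LinearMap.coe_comp, LinearMap.coe_mk, AddHom.coe_mk, Function.comp_apply,
    LinearMap.id_coe, id_eq, Prod.ext_iff]
  constructor
  · linear_combination (-(q.1)/2) * theta_sq
  · linear_combination (-(q.2)/2) * theta_sq

lemma img : ⇑fmap '' ((Lat1 : Set ℂ) ×ˢ (Lat1 : Set ℂ)) = (Lat3 : Set ℂ) ×ˢ (Lat4 : Set ℂ) := by
  apply Set.Subset.antisymm
  · rintro x ⟨⟨z, w⟩, ⟨hz, hw⟩, rfl⟩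
    obtain ⟨m, n, rfl⟩ := mem_pair.mp hz
    obtain ⟨p, q, rfl⟩ := mem_pair.mp hw
    refine ⟨?_, ?_⟩
    · refine mem_pair.mpr ⟨m - n - 3*q, 2*n + p + q, ?_⟩
      show 2 * (↑m * 1 + ↑n * theta) + (1 + theta) * (↑p * 1 + ↑q * theta) = _
      push_cast
      linear_combination (q : ℂ) * theta_sq
    · refine mem_pair.mpr ⟨-m - 2*n - p + q, m - n - 2*q, ?_⟩
      show ((theta - 1)/2) * (↑m * 1 + ↑n * theta) - (↑p * 1 + ↑q * theta) = _
      push_cast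
      linear_combination ((n : ℂ)/2) * theta_sq
  · rintro ⟨u, v⟩ ⟨hu, hv⟩
    obtain ⟨m, n, rfl⟩ := mem_pair.mp hu
    obtain ⟨p, q, rfl⟩ := mem_pair.mp hv
    refine ⟨gmap (↑m * 2 + ↑n * (1 + theta), ↑p * 1 + ↑q * ((1 + theta)/2)), ⟨?_, ?_⟩, ?_⟩
    · refine mem_pair.mpr ⟨-2*m - n - p + 2*q, -n - p - q, ?_⟩
      show -(↑m * 2 + ↑n * (1 + theta)) - (1 + theta) * (↑p * 1 + ↑q * ((1 + theta)/2)) = _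
      push_cast
      linear_combination (-(q : ℂ)/2) * theta_sq
    · refine mem_pair.mpr ⟨m + 3*n + 2*p + q, q - m, ?_⟩
      show ((1 - theta)/2) * (↑m * 2 + ↑n * (1 + theta)) + 2 * (↑p * 1 + ↑q * ((1 + theta)/2)) = _
      push_cast
      linear_combination (-(n : ℂ)/2) * theta_sq
    · have := LinearMap.ext_iff.mp fg (↑m * 2 + ↑n * (1 + theta), ↑p * 1 + ↑q * ((1 + theta)/2))
      simpa using this


lemma one_mem_L1' {a : ℂ} : a ∈ AddSubgroup.closure {(1:ℂ), theta} ∨ True := Or.inr trivial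

lemma notEll3 : ¬ EllIso Lat1 Lat3 := by
  rintro ⟨α, hα0, hα⟩
  have hαmem : α ∈ (Lat3 : Set ℂ) := by
    rw [← hα]
    exact ⟨1, mem_pair.mpr ⟨1, 0, by push_cast; ring⟩, mul_one α⟩
  obtain ⟨m, n, hmn⟩ := mem_pair.mp hαmem
  have h2mem : (2:ℂ) ∈ (Lat3 : Set ℂ) := mem_pair.mpr ⟨1, 0, by push_cast; ring⟩
  rw [← hα] at h2mem
  obtain ⟨z, hz, hz2⟩ := h2mem
  obtain ⟨p, q, rfl⟩ := mem_pair.mp hz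
  have h3mem : (1 + theta) ∈ (Lat3 : Set ℂ) := mem_pair.mpr ⟨0, 1, by push_cast; ring⟩
  rw [← hα] at h3mem
  obtain ⟨w, hw, hw2⟩ := h3mem
  obtain ⟨r, s, rfl⟩ := mem_pair.mp hw
  have hαrw : α = (((2*m+n : ℤ) : ℝ) : ℂ) + (((n : ℤ) : ℝ) : ℂ) * theta := by
    rw [hmn]; push_cast; ring
  have hnα : Complex.normSq α = ((2*m+n : ℤ) : ℝ)^2 + 5 * ((n : ℤ) : ℝ)^2 := by
    rw [hαrw, nsq]
  have hnz : Complex.normSq ((p : ℂ) * 1 + (q : ℂ) * theta) = ((p:ℤ):ℝ)^2 + 5 * ((q:ℤ):ℝ)^2 := by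
    rw [show ((p : ℂ) * 1 + (q : ℂ) * theta) = (((p:ℤ):ℝ):ℂ) + (((q:ℤ):ℝ):ℂ) * theta by push_cast; ring, nsq]
  have hnw : Complex.normSq ((r : ℂ) * 1 + (s : ℂ) * theta) = ((r:ℤ):ℝ)^2 + 5 * ((s:ℤ):ℝ)^2 := by
    rw [show ((r : ℂ) * 1 + (s : ℂ) * theta) = (((r:ℤ):ℝ):ℂ) + (((s:ℤ):ℝ):ℂ) * theta by push_cast; ring, nsq]
  have e1 : (((2*m+n)^2 + 5*n^2) * (p^2 + 5*q^2) : ℤ) = 4 := by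
    have := congrArg Complex.normSq hz2
    rw [Complex.normSq_mul, hnα, hnz] at this
    have h4 : Complex.normSq 2 = 4 := by norm_num [Complex.normSq_apply]
    rw [h4] at this
    exact_mod_cast this
  have e2 : (((2*m+n)^2 + 5*n^2) * (r^2 + 5*s^2) : ℤ) = 6 := by
    have := congrArg Complex.normSq hw2
    rw [Complex.normSq_mul, hnα, hnw] at this
    have h6 : Complex.normSq (1 + theta) = 6 := by
      rw [show (1 + theta : ℂ) = ((1:ℝ):ℂ) + ((1:ℝ):ℂ) * theta by push_cast; ring, nsq]; norm_num
    rw [h6] at this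
    exact_mod_cast this
  refine final m n p q r s ?_ e1 e2
  rintro ⟨h1, h2⟩
  apply hα0
  have hm : m = 0 := by omega
  rw [hmn, hm, h2]
  push_cast; ring

lemma notEll4 : ¬ EllIso Lat1 Lat4 := by
  rintro ⟨α, hα0, hα⟩
  have hαmem : α ∈ (Lat4 : Set ℂ) := by
    rw [← hα]
    exact ⟨1, mem_pair.mpr ⟨1, 0, by push_cast; ring⟩, mul_one α⟩
  obtain ⟨m, n, hmn⟩ := mem_pair.mp hαmem
  have h2mem : (1:ℂ) ∈ (Lat4 : Set ℂ) := mem_pair.mpr ⟨1, 0, by push_cast; ring⟩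
  rw [← hα] at h2mem
  obtain ⟨z, hz, hz2⟩ := h2mem
  obtain ⟨p, q, rfl⟩ := mem_pair.mp hz
  have h3mem : ((1 + theta)/2) ∈ (Lat4 : Set ℂ) := mem_pair.mpr ⟨0, 1, by push_cast; ring⟩
  rw [← hα] at h3mem
  obtain ⟨w, hw, hw2⟩ := h3mem
  obtain ⟨r, s, rfl⟩ := mem_pair.mp hw
  have hαrw : α = ((((2*m+n : ℤ) : ℝ)/2 : ℝ) : ℂ) + ((((n : ℤ) : ℝ)/2 : ℝ) : ℂ) * theta := by
    rw [hmn]; push_cast; ring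
  have hnα : Complex.normSq α = (((2*m+n : ℤ) : ℝ)/2)^2 + 5 * (((n : ℤ) : ℝ)/2)^2 := by
    rw [hαrw, nsq]
  have hnz : Complex.normSq ((p : ℂ) * 1 + (q : ℂ) * theta) = ((p:ℤ):ℝ)^2 + 5 * ((q:ℤ):ℝ)^2 := by
    rw [show ((p : ℂ) * 1 + (q : ℂ) * theta) = (((p:ℤ):ℝ):ℂ) + (((q:ℤ):ℝ):ℂ) * theta by push_cast; ring, nsq]
  have hnw : Complex.normSq ((r : ℂ) * 1 + (s : ℂ) * theta) = ((r:ℤ):ℝ)^2 + 5 * ((s:ℤ):ℝ)^2 := by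
    rw [show ((r : ℂ) * 1 + (s : ℂ) * theta) = (((r:ℤ):ℝ):ℂ) + (((s:ℤ):ℝ):ℂ) * theta by push_cast; ring, nsq]
  have e1 : (((2*m+n)^2 + 5*n^2) * (p^2 + 5*q^2) : ℤ) = 4 := by
    have := congrArg Complex.normSq hz2
    rw [Complex.normSq_mul, hnα, hnz] at this
    have h1 : Complex.normSq 1 = 1 := by norm_num [Complex.normSq_apply]
    rw [h1] at this
    have : (((2*m+n:ℤ):ℝ)^2 + 5*((n:ℤ):ℝ)^2) * (((p:ℤ):ℝ)^2 + 5*((q:ℤ):ℝ)^2) = 4 := by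
      linear_combination 4 * this
    exact_mod_cast this
  have e2 : (((2*m+n)^2 + 5*n^2) * (r^2 + 5*s^2) : ℤ) = 6 := by
    have := congrArg Complex.normSq hw2
    rw [Complex.normSq_mul, hnα, hnw] at this
    have h6 : Complex.normSq ((1 + theta)/2) = 3/2 := by
      rw [show ((1 + theta)/2 : ℂ) = (((1:ℝ)/2:ℝ):ℂ) + (((1:ℝ)/2:ℝ):ℂ) * theta by push_cast; ring, nsq]
      norm_num
    rw [h6] at this
    have : (((2*m+n:ℤ):ℝ)^2 + 5*((n:ℤ):ℝ)^2) * (((r:ℤ):ℝ)^2 + 5*((s:ℤ):ℝ)^2) = 6 := by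
      linear_combination 4 * this
    exact_mod_cast this
  refine final m n p q r s ?_ e1 e2
  rintro ⟨h1, h2⟩
  apply hα0
  have hm : m = 0 := by omega
  rw [hmn, hm, h2]
  push_cast; ring

/-- There exist abelian surfaces which can be written as a product of two elliptic curves in
two genuinely distinct ways: elliptic curves `E₁ = ℂ/L₁`, `E₂ = ℂ/L₂`, `F₁ = ℂ/L₃`,
`F₂ = ℂ/L₄` with `E₁ × E₂ ≅ F₁ × F₂` but `{E₁, E₂} ≇ {F₁, F₂}` as unordered pairs. -/
theorem exists_abelian_surface_two_splittings :
    ∃ L₁ L₂ L₃ L₄ : AddSubgroup ℂ,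
      IsComplexLattice L₁ ∧ IsComplexLattice L₂ ∧ IsComplexLattice L₃ ∧
      IsComplexLattice L₄ ∧ ProdIso L₁ L₂ L₃ L₄ ∧
      ¬((EllIso L₁ L₃ ∧ EllIso L₂ L₄) ∨ (EllIso L₁ L₄ ∧ EllIso L₂ L₃)) := by
  refine ⟨Lat1, Lat1, Lat3, Lat4, ⟨1, theta, li1, rfl⟩, ⟨1, theta, li1, rfl⟩,
    ⟨2, 1 + theta, li3, rfl⟩, ⟨1, (1 + theta)/2, li4, rfl⟩, ?_, ?_⟩
  · refine ⟨LinearEquiv.ofLinear fmap gmap fg gf, ?_⟩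
    exact img
  · rintro (⟨h13, -⟩ | ⟨h14, -⟩)
    · exact notEll3 h13
    · exact notEll4 h14
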